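/- Let m be a positive integer divisible by 3 and let ζ ∈ ℂ be a primitive 6th root of unity. Then the limit as q → ζ of the product ((1-q^{14m+14})(1-q^{14m+6})(1-q^{14m+4})) / ((1-q^{14})(1-q^{6})(1-q^{4})) equals (7m+3)/3. -/

import Mathlib

open Filter

theorem stmt_17 (m : ℕ) (hm : 0 < m) (h3 : 3 ∣ m) (ζ : ℂ)
    (hζ : IsPrimitiveRoot ζ 6) :
    Tendsto (fun q : ℂ =>
        ((1 - q ^ (14 * m + 14)) * (1 - q ^ (14 * m + 6)) * (1 - q ^ (14 * m + 4))) /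
          ((1 - q ^ 14) * (1 - q ^ 6) * (1 - q ^ 4)))
      (nhdsWithin ζ {ζ}ᶜ) (nhds ((7 * m + 3) / 3 : ℂ)) := by
  obtain ⟨k, rfl⟩ := h3
  have h6 : ζ ^ 6 = 1 := hζ.pow_eq_one
  have h2 : ζ ^ 2 ≠ 1 := hζ.pow_ne_one_of_pos_of_lt (by norm_num) (by norm_num)
  have h4 : ζ ^ 4 ≠ 1 := hζ.pow_ne_one_of_pos_of_lt (by norm_num) (by norm_num)
  have h14 : ζ ^ 14 = ζ ^ 2 := by
    have h : (14 : ℕ) = 6 * 2 + 2 := by norm_num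
    rw [h, pow_add, pow_mul, h6, one_pow, one_mul]
  have hd14 : (1 : ℂ) - ζ ^ 14 ≠ 0 := by
    rw [h14]; exact sub_ne_zero_of_ne (Ne.symm h2)
  have hd4 : (1 : ℂ) - ζ ^ 4 ≠ 0 := sub_ne_zero_of_ne (Ne.symm h4)
  set N := 7 * k + 1 with hN
  -- key algebraic identity away from 6th roots of unity
  have key : ∀ q : ℂ, q ^ 6 ≠ 1 →
      ((1 - q ^ (14 * (3 * k) + 14)) * (1 - q ^ (14 * (3 * k) + 6)) *
          (1 - q ^ (14 * (3 * k) + 4))) /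
        ((1 - q ^ 14) * (1 - q ^ 6) * (1 - q ^ 4)) =
      ((1 - q ^ (14 * (3 * k) + 14)) * (1 - q ^ (14 * (3 * k) + 4)) *
          ∑ i ∈ Finset.range N, (q ^ 6) ^ i) /
        ((1 - q ^ 14) * (1 - q ^ 4)) := by
    intro q hq
    have hgeo : 1 - q ^ (14 * (3 * k) + 6) =
        (∑ i ∈ Finset.range N, (q ^ 6) ^ i) * (1 - q ^ 6) := by
      have h1 : q ^ (14 * (3 * k) + 6) = (q ^ 6) ^ N := by
        rw [← pow_mul]; congr 1; rw [hN]; ring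
      rw [h1]
      have h2 := geom_sum_mul (q ^ 6) N
      linear_combination h2
    rw [hgeo,
      show (1 - q ^ (14 * (3 * k) + 14)) *
          ((∑ i ∈ Finset.range N, (q ^ 6) ^ i) * (1 - q ^ 6)) *
          (1 - q ^ (14 * (3 * k) + 4)) =
        ((1 - q ^ (14 * (3 * k) + 14)) * (1 - q ^ (14 * (3 * k) + 4)) *
          ∑ i ∈ Finset.range N, (q ^ 6) ^ i) * (1 - q ^ 6) from by ring,
      show (1 - q ^ 14) * (1 - q ^ 6) * (1 - q ^ 4) =
        ((1 - q ^ 14) * (1 - q ^ 4)) * (1 - q ^ 6) from by ring]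
    exact mul_div_mul_right _ _ (sub_ne_zero_of_ne (fun h => hq h.symm))
  -- eventually q^6 ≠ 1 on the punctured neighborhood
  have hfin : ({q : ℂ | q ^ 6 = 1} \ {ζ}).Finite := by
    apply Set.Finite.diff
    have hsub : {q : ℂ | q ^ 6 = 1} ⊆ ((Polynomial.nthRoots 6 (1 : ℂ)).toFinset : Set ℂ) := by
      intro x hx
      simp only [Finset.mem_coe, Multiset.mem_toFinset]
      exact (Polynomial.mem_nthRoots (by norm_num : 0 < 6)).mpr hx
    exact Set.Finite.subset (Finset.finite_toSet _) hsub
  have hev : ∀ᶠ q in nhdsWithin ζ {ζ}ᶜ, q ^ 6 ≠ 1 := by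
    have hopen : IsOpen ({q : ℂ | q ^ 6 = 1} \ {ζ})ᶜ := hfin.isClosed.isOpen_compl
    have hζmem : ζ ∈ ({q : ℂ | q ^ 6 = 1} \ {ζ})ᶜ := by simp
    have hevn : ∀ᶠ q in nhdsWithin ζ {ζ}ᶜ, q ∈ ({q : ℂ | q ^ 6 = 1} \ {ζ})ᶜ :=
      eventually_nhdsWithin_of_eventually_nhds (hopen.eventually_mem hζmem)
    filter_upwards [hevn, self_mem_nhdsWithin] with q hq1 hq2
    intro hq6
    exact hq1 ⟨hq6, hq2⟩
  -- limit of the continuous replacement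
  have hg : Tendsto (fun q : ℂ =>
      ((1 - q ^ (14 * (3 * k) + 14)) * (1 - q ^ (14 * (3 * k) + 4)) *
          ∑ i ∈ Finset.range N, (q ^ 6) ^ i) /
        ((1 - q ^ 14) * (1 - q ^ 4)))
      (nhdsWithin ζ {ζ}ᶜ) (nhds ((7 * ((3 : ℕ) * k : ℕ) + 3) / 3 : ℂ)) := by
    have hc : ContinuousAt (fun q : ℂ =>
        ((1 - q ^ (14 * (3 * k) + 14)) * (1 - q ^ (14 * (3 * k) + 4)) *
            ∑ i ∈ Finset.range N, (q ^ 6) ^ i) /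
          ((1 - q ^ 14) * (1 - q ^ 4))) ζ := by
      apply ContinuousAt.div
      · fun_prop
      · fun_prop
      · exact mul_ne_zero hd14 hd4
    have e1 : ζ ^ (14 * (3 * k) + 14) = ζ ^ 2 := by
      have h : 14 * (3 * k) + 14 = 6 * (7 * k + 2) + 2 := by ring
      rw [h, pow_add, pow_mul, h6, one_pow, one_mul]
    have e2 : ζ ^ (14 * (3 * k) + 4) = ζ ^ 4 := by
      have h : 14 * (3 * k) + 4 = 6 * (7 * k) + 4 := by ring
      rw [h, pow_add, pow_mul, h6, one_pow, one_mul]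
    have hval : ((1 - ζ ^ (14 * (3 * k) + 14)) * (1 - ζ ^ (14 * (3 * k) + 4)) *
          ∑ i ∈ Finset.range N, (ζ ^ 6) ^ i) /
        ((1 - ζ ^ 14) * (1 - ζ ^ 4)) = ((7 * ((3 : ℕ) * k : ℕ) + 3) / 3 : ℂ) := by
      rw [e1, e2, h14, h6]
      simp only [one_pow, Finset.sum_const, Finset.card_range, nsmul_eq_mul, mul_one]
      rw [hN]
      have hne : ((1 : ℂ) - ζ ^ 2) * (1 - ζ ^ 4) ≠ 0 :=
        mul_ne_zero (sub_ne_zero_of_ne (Ne.symm h2)) (sub_ne_zero_of_ne (Ne.symm h4))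
      field_simp
      push_cast; ring
    have := hc.tendsto
    rw [hval] at this
    exact this.mono_left nhdsWithin_le_nhds
  refine Tendsto.congr' ?_ hg
  filter_upwards [hev] with q hq
  exact (key q hq).symm
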